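/- Let M : Matrix (Fin d) (Fin d) ℝ be symmetric (M = Mᵀ) with all entries nonnegative, and let σ(M) : Matrix (Fin d × Fin d) (Fin d × Fin d) ℂ be the diagonal matrix with σ(M) (i,j) (i,j) = M i j and all other entries 0. Then the least r ∈ ℕ such that there exist A k : Matrix (Fin d) (Fin d) ℂ (k < r) with σ(M) = Σ_{k<r} A k ⊗ₖ A k equals the symmetric rank symm-rank(M), i.e. the least r such that there exists A : Matrix (Fin d) (Fin r) ℂ with the entrywise complexification of M equal to A * Aᵀ. -/

import Mathlib

open Matrix Kronecker
open scoped BigOperators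

/-- The diagonal psd matrix associated to a nonnegative symmetric matrix `M`. -/
noncomputable def sigmaM {d : ℕ} (M : Matrix (Fin d) (Fin d) ℝ) :
    Matrix (Fin d × Fin d) (Fin d × Fin d) ℂ :=
  Matrix.diagonal (fun p : Fin d × Fin d => (M p.1 p.2 : ℂ))

/-- The symmetric (t.i.) operator Schmidt rank of `σ(M)` equals the symmetric rank of `M`. -/
theorem tiOsr_sigmaM_eq_symmRank {d : ℕ} (M : Matrix (Fin d) (Fin d) ℝ)
    (hsymm : M = Mᵀ) (hM : ∀ i j, 0 ≤ M i j) :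
    sInf {r : ℕ | ∃ A : Fin r → Matrix (Fin d) (Fin d) ℂ,
        sigmaM M = ∑ k, A k ⊗ₖ A k} =
    sInf {r : ℕ | ∃ A : Matrix (Fin d) (Fin r) ℂ,
        M.map (fun x => (x : ℂ)) = A * Aᵀ} := by
  congr 1
  ext r
  simp only [Set.mem_setOf_eq]
  constructor
  · rintro ⟨A, hA⟩
    refine ⟨fun i k => A k i i, ?_⟩
    ext i j
    have h := congrFun (congrFun hA (i, j)) (i, j)
    simp only [sigmaM, Matrix.diagonal_apply_eq, Matrix.sum_apply,
      Matrix.kroneckerMap_apply] at h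
    exact h.trans rfl
  · rintro ⟨B, hB⟩
    refine ⟨fun k => Matrix.diagonal (fun i => B i k), ?_⟩
    ext ⟨i, j⟩ ⟨i', j'⟩
    have hb : (M i j : ℂ) = ∑ k, B i k * B j k := by
      have := congrFun (congrFun hB i) j
      simpa [Matrix.mul_apply, Matrix.transpose_apply, Matrix.map_apply] using this
    simp only [sigmaM, Matrix.sum_apply, Matrix.kroneckerMap_apply,
      Matrix.diagonal_apply, Prod.mk.injEq]
    by_cases hi : i = i'
    · by_cases hj : j = j'
      · subst hi; subst hj; simpa using hb
      · simp [hi, hj]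
    · simp [hi]
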